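/- Rank-transform sufficiency for regression: for any real random variable X with distribution function F_X, and any integrable real random variable W defined on the same probability space, the conditional expectation of W given X coincides almost surely with the conditional expectation of W given F_X(X): E[W | σ(X)] = E[W | σ(F_X ∘ X)] almost surely. -/

import Mathlib

open MeasureTheory

/-- If `b ≤ x` and `F x ≤ F b` where `F` is the CDF of `X`, then `P(b < X ≤ x) = 0`. -/
lemma aux_null_Ioc {Ω : Type*} [MeasurableSpace Ω] (P : Measure Ω) [IsProbabilityMeasure P]
    (X : Ω → ℝ) (hX : Measurable X)
    (F : ℝ → ℝ) (hF : ∀ x, F x = (P {ω | X ω ≤ x}).toReal)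
    {b x : ℝ} (hbx : b ≤ x) (hFx : F x ≤ F b) :
    P {ω | b < X ω ∧ X ω ≤ x} = 0 := by
  have hFb : F b ≤ F x := by
    rw [hF, hF]
    exact ENNReal.toReal_mono (measure_ne_top P _)
      (measure_mono fun ω hw => le_trans hw hbx)
  have hPP : P {ω | X ω ≤ x} = P {ω | X ω ≤ b} := by
    have h1 := (hF x).symm.trans ((le_antisymm hFx hFb) ▸ hF b : F x = (P {ω | X ω ≤ b}).toReal)
    exact (ENNReal.toReal_eq_toReal_iff' (measure_ne_top P _) (measure_ne_top P _)).mp h1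
  have hsplit : P {ω | X ω ≤ x} = P {ω | X ω ≤ b} + P {ω | b < X ω ∧ X ω ≤ x} := by
    have hu : {ω | X ω ≤ x} = {ω | X ω ≤ b} ∪ {ω | b < X ω ∧ X ω ≤ x} := by
      ext ω; simp only [Set.mem_setOf_eq, Set.mem_union]
      constructor
      · intro h; rcases le_or_gt (X ω) b with h' | h'
        · exact Or.inl h'
        · exact Or.inr ⟨h', h⟩
      · rintro (h | ⟨_, h⟩)
        · exact le_trans h hbx
        · exact h
    have hd : Disjoint {ω | X ω ≤ b} {ω | b < X ω ∧ X ω ≤ x} := by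
      rw [Set.disjoint_left]; rintro ω h1 ⟨h2, _⟩; exact absurd h1 (not_le.mpr h2)
    have hm1 : MeasurableSet {ω | b < X ω ∧ X ω ≤ x} := by
      have : {ω | b < X ω ∧ X ω ≤ x} = X ⁻¹' (Set.Ioc b x) := rfl
      rw [this]; exact hX measurableSet_Ioc
    rw [hu, measure_union hd hm1]
  rw [hPP] at hsplit
  nth_rewrite 1 [← add_zero (P {ω | X ω ≤ b})] at hsplit
  exact ((ENNReal.add_right_inj (measure_ne_top P _)).mp hsplit).symm

/-- The set where `X > b` but `F X ≤ F b` is null. -/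
lemma aux_null_D {Ω : Type*} [MeasurableSpace Ω] (P : Measure Ω) [IsProbabilityMeasure P]
    (X : Ω → ℝ) (hX : Measurable X)
    (F : ℝ → ℝ) (hF : ∀ x, F x = (P {ω | X ω ≤ x}).toReal) (hFmono : Monotone F) (b : ℝ) :
    P {ω | b < X ω ∧ F (X ω) ≤ F b} = 0 := by
  set T' : Set ℝ := {x | b < x ∧ F x ≤ F b ∧ ∀ q : ℚ, x ≤ q → F b < F q} with hT'
  have hsub : T'.Subsingleton := by
    intro x₁ h₁ x₂ h₂
    by_contra hne
    rcases lt_or_gt_of_ne hne with hlt | hlt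
    · obtain ⟨q, hq1, hq2⟩ := exists_rat_btwn hlt
      exact absurd (le_trans (hFmono hq2.le) h₂.2.1) (not_le.mpr (h₁.2.2 q hq1.le))
    · obtain ⟨q, hq1, hq2⟩ := exists_rat_btwn hlt
      exact absurd (le_trans (hFmono hq2.le) h₁.2.1) (not_le.mpr (h₂.2.2 q hq1.le))
  have hcover : {ω | b < X ω ∧ F (X ω) ≤ F b} ⊆
      (⋃ q : ℚ, {ω | ((b < (q : ℝ) ∧ F q ≤ F b) ∧ b < X ω ∧ X ω ≤ q)}) ∪ (X ⁻¹' T') := by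
    intro ω ⟨hb, hFle⟩
    by_cases hq : ∃ q : ℚ, X ω ≤ q ∧ F q ≤ F b
    · obtain ⟨q, hq1, hq2⟩ := hq
      exact Or.inl (Set.mem_iUnion.mpr ⟨q, ⟨lt_of_lt_of_le hb hq1, hq2⟩, hb, hq1⟩)
    · push_neg at hq
      exact Or.inr ⟨hb, hFle, hq⟩
  refine measure_mono_null hcover (measure_union_null ?_ ?_)
  · refine measure_iUnion_null fun q => ?_
    by_cases h : b < (q : ℝ) ∧ F q ≤ F b
    · have : {ω | ((b < (q : ℝ) ∧ F q ≤ F b) ∧ b < X ω ∧ X ω ≤ q)}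
          = {ω | b < X ω ∧ X ω ≤ (q : ℝ)} := by
        ext ω; simp [h]
      rw [this]
      exact aux_null_Ioc P X hX F hF h.1.le h.2
    · have : {ω | ((b < (q : ℝ) ∧ F q ≤ F b) ∧ b < X ω ∧ X ω ≤ q)} = ∅ := by
        ext ω; simp [h]
      simp [this]
  · rcases Set.eq_empty_or_nonempty T' with hT | ⟨a, ha⟩
    · simp [hT]
    · refine measure_mono_null (fun ω hw => ?_) (aux_null_Ioc P X hX F hF ha.1.le ha.2.1)
      have hxa : X ω = a := hsub hw ha
      exact ⟨hxa ▸ (hw : X ω ∈ T').1, hxa.le⟩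

/-- Rank-transform sufficiency for regression: for any real random
variable `X` with distribution function `F_X` and any integrable real random
variable `W` on the same probability space,
`E[W | σ(X)] = E[W | σ(F_X ∘ X)]` almost surely. -/
theorem rank_transform_sufficiency
    {Ω : Type*} [MeasurableSpace Ω] (P : Measure Ω) [IsProbabilityMeasure P]
    (X W : Ω → ℝ) (hX : Measurable X) (hW : Integrable W P)
    (F : ℝ → ℝ) (hF : ∀ x, F x = (P {ω | X ω ≤ x}).toReal) :
    P[W|MeasurableSpace.comap X Real.measurableSpace]
      =ᵐ[P] P[W|MeasurableSpace.comap (F ∘ X) Real.measurableSpace] := by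
  have hFmono : Monotone F := by
    intro a c hac
    rw [hF, hF]
    exact ENNReal.toReal_mono (measure_ne_top P _) (measure_mono fun ω hw => le_trans hw hac)
  have hFmeas : Measurable F := hFmono.measurable
  have hm₁ : MeasurableSpace.comap X Real.measurableSpace ≤ ‹MeasurableSpace Ω› := hX.comap_le
  have hm₂ : MeasurableSpace.comap (F ∘ X) Real.measurableSpace ≤ ‹MeasurableSpace Ω› :=
    (hFmeas.comp hX).comap_le
  have hle : MeasurableSpace.comap (F ∘ X) Real.measurableSpace ≤
      MeasurableSpace.comap X Real.measurableSpace := by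
    rintro s ⟨B, hB, rfl⟩
    exact ⟨F ⁻¹' B, hFmeas hB, rfl⟩
  -- key: every σ(X)-set is a.e. equal to a σ(F∘X)-set
  have key : ∀ B : Set ℝ, MeasurableSet B →
      ∃ t, MeasurableSet[MeasurableSpace.comap (F ∘ X) Real.measurableSpace] t ∧ (X ⁻¹' B : Set Ω) =ᵐ[P] t := by
    intro B hB
    have hB' : MeasurableSet[MeasurableSpace.generateFrom (Set.range Set.Iic)] B := by
      rw [← borel_eq_generateFrom_Iic ℝ]
      exact hB
    refine MeasurableSpace.generateFrom_induction (Set.range Set.Iic)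
      (fun B _ => ∃ t, MeasurableSet[MeasurableSpace.comap (F ∘ X) Real.measurableSpace] t ∧ (X ⁻¹' B : Set Ω) =ᵐ[P] t)
      ?_ ?_ ?_ ?_ B hB'
    · rintro _ ⟨c, rfl⟩ _
      refine ⟨(F ∘ X) ⁻¹' (Set.Iic (F c)), ⟨Set.Iic (F c), measurableSet_Iic, rfl⟩, ?_⟩
      have hnull := aux_null_D P X hX F hF hFmono c
      rw [Filter.eventuallyEq_set, ae_iff]
      · refine measure_mono_null (fun ω hw => ?_) hnull
        simp only [Set.mem_setOf_eq, Set.mem_preimage, Set.mem_Iic,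
          Function.comp_apply] at hw ⊢
        have h1 : ¬ X ω ≤ c := fun h => hw (iff_of_true h (hFmono h))
        have h2 : F (X ω) ≤ F c := by tauto
        exact ⟨not_le.mp h1, h2⟩
    · exact ⟨∅, @MeasurableSet.empty _ (MeasurableSpace.comap (F ∘ X) Real.measurableSpace), by simp⟩
    · rintro s _ ⟨t, htm, hst⟩
      exact ⟨tᶜ, htm.compl, by rw [Set.preimage_compl]; exact hst.compl⟩
    · rintro s _ hs
      choose t htm hst using hs
      exact ⟨⋃ n, t n, MeasurableSet.iUnion htm,
        by rw [Set.preimage_iUnion]; exact EventuallyEq.countable_iUnion hst⟩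
  haveI : SigmaFinite (P.trim hm₁) := by infer_instance
  haveI : SigmaFinite (P.trim hm₂) := by infer_instance
  refine (ae_eq_condExp_of_forall_setIntegral_eq hm₁ hW
    (fun s _ _ => integrable_condExp.integrableOn) ?_
    (StronglyMeasurable.aestronglyMeasurable (stronglyMeasurable_condExp.mono hle))).symm
  rintro s ⟨B, hB, rfl⟩ _
  obtain ⟨t, htm, hst⟩ := key B hB
  calc ∫ ω in X ⁻¹' B, (P[W|MeasurableSpace.comap (F ∘ X) Real.measurableSpace]) ω ∂P
      = ∫ ω in t, (P[W|MeasurableSpace.comap (F ∘ X) Real.measurableSpace]) ω ∂P := setIntegral_congr_set hst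
    _ = ∫ ω in t, W ω ∂P := setIntegral_condExp hm₂ hW htm
    _ = ∫ ω in X ⁻¹' B, W ω ∂P := setIntegral_congr_set hst.symm
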